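/- Every real-valued polynomial r on ℂⁿ of degree at most k can be written as r = Re(h) + Σ_{j=1}^{N} |f_j|² − Σ_{j=1}^{N} |g_j|², where h is a holomorphic polynomial, f = (f₁,…,f_N) and g = (g₁,…,g_N) are tuples of holomorphic polynomials, and N depends only on n and k. -/

import Mathlib

lemma pol_id (F G : ℂ) :
    ‖2⁻¹ * (F + G)‖ ^ 2 - ‖2⁻¹ * (F - G)‖ ^ 2
      = (F * (starRingEnd ℂ) G).re := by
  simp only [Complex.sq_norm]
  simp only [Complex.normSq_apply, Complex.mul_re, Complex.mul_im, Complex.add_re,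
    Complex.add_im, Complex.sub_re, Complex.sub_im, Complex.conj_re, Complex.conj_im,
    Complex.inv_re, Complex.inv_im, Complex.normSq_ofNat, Complex.re_ofNat, Complex.im_ofNat]
  norm_num
  ring

/-- D'Angelo's decomposition. Every real-valued polynomial `r` on `ℂⁿ` of
degree at most `k` (a polynomial in `z` and `z̄`) can be written as
`r = Re h + ∑_{j=1}^N |f_j|² − ∑_{j=1}^N |g_j|²` with `h, f_j, g_j` holomorphic polynomials,
where `N` depends only on `n` and `k`. -/
theorem dangelo_decomposition (n k : ℕ) :
    ∃ N : ℕ, ∀ P : MvPolynomial (Fin n ⊕ Fin n) ℂ, P.totalDegree ≤ k →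
      (∀ z : Fin n → ℂ,
        (MvPolynomial.eval (Sum.elim z fun j => starRingEnd ℂ (z j)) P).im = 0) →
      ∃ (h : MvPolynomial (Fin n) ℂ) (f g : Fin N → MvPolynomial (Fin n) ℂ),
        ∀ z : Fin n → ℂ,
          (MvPolynomial.eval (Sum.elim z fun j => starRingEnd ℂ (z j)) P).re
            = (MvPolynomial.eval z h).re
              + ∑ j, ‖MvPolynomial.eval z (f j)‖ ^ 2
              - ∑ j, ‖MvPolynomial.eval z (g j)‖ ^ 2 := by
  classical
  refine ⟨Fintype.card ((Fin n ⊕ Fin n) → Fin (k + 1)), ?_⟩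
  intro P hdeg _hreal
  set ι := (Fin n ⊕ Fin n) → Fin (k + 1)
  let E : Fin (Fintype.card ι) ≃ ι := (Fintype.equivFin ι).symm
  let D : ι → ((Fin n ⊕ Fin n) →₀ ℕ) :=
    fun e => Finsupp.equivFunOnFinite.symm (fun i => (e i : ℕ))
  have hD : Function.Injective D := by
    intro a b hab
    funext i
    have := congrArg (fun d => (d : (Fin n ⊕ Fin n) →₀ ℕ) i) hab
    simpa [D, Fin.val_injective.eq_iff] using this
  let A : ι → MvPolynomial (Fin n) ℂ :=
    fun e => MvPolynomial.C (P.coeff (D e)) * ∏ i, MvPolynomial.X i ^ (D e (Sum.inl i))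
  let B : ι → MvPolynomial (Fin n) ℂ :=
    fun e => ∏ i, MvPolynomial.X i ^ (D e (Sum.inr i))
  refine ⟨0, fun j => MvPolynomial.C (2⁻¹ : ℂ) * (A (E j) + B (E j)),
    fun j => MvPolynomial.C (2⁻¹ : ℂ) * (A (E j) - B (E j)), ?_⟩
  intro z
  have hsum : ∀ j, ‖MvPolynomial.eval z (MvPolynomial.C (2⁻¹ : ℂ) * (A (E j) + B (E j)))‖ ^ 2
      - ‖MvPolynomial.eval z (MvPolynomial.C (2⁻¹ : ℂ) * (A (E j) - B (E j)))‖ ^ 2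
      = (MvPolynomial.eval z (A (E j)) * (starRingEnd ℂ) (MvPolynomial.eval z (B (E j)))).re := by
    intro j
    simpa using pol_id (MvPolynomial.eval z (A (E j))) (MvPolynomial.eval z (B (E j)))
  simp only [map_zero, Complex.zero_re, zero_add]
  rw [← Finset.sum_sub_distrib]
  rw [Finset.sum_congr rfl (fun j _ => hsum j)]
  -- turn RHS into re of a complex sum
  rw [← Complex.re_sum]
  congr 1
  -- now a complex identity: eval P at (z, conj z) = ∑ j, eval A * conj (eval B)
  rw [Equiv.sum_comp E (fun e => MvPolynomial.eval z (A e) * (starRingEnd ℂ) (MvPolynomial.eval z (B e)))]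
  have hterm : ∀ e : ι, MvPolynomial.eval z (A e) * (starRingEnd ℂ) (MvPolynomial.eval z (B e))
      = P.coeff (D e) * ∏ i, (Sum.elim z fun j => starRingEnd ℂ (z j)) i ^ (D e i) := by
    intro e
    rw [Fintype.prod_sum_type]
    simp only [A, B, map_mul, map_prod, map_pow, MvPolynomial.eval_C, MvPolynomial.eval_X,
      Sum.elim_inl, Sum.elim_inr]
    ring
  rw [Finset.sum_congr rfl (fun e _ => hterm e)]
  set G : ((Fin n ⊕ Fin n) →₀ ℕ) → ℂ :=
    fun d => P.coeff d * ∏ i, (Sum.elim z fun j => starRingEnd ℂ (z j)) i ^ d i with hG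
  have himg : ∑ d ∈ Finset.univ.image D, G d = ∑ e : ι, G (D e) :=
    Finset.sum_image (fun a _ b _ hab => hD hab)
  rw [← himg, MvPolynomial.eval_eq']
  refine Finset.sum_subset ?_ ?_
  · intro d hd
    have hle : ∀ i, d i ≤ k := by
      intro i
      have h1 : d i ≤ d.sum fun _ m => m := by
        by_cases hdi : d i = 0
        · simp [hdi]
        · exact Finset.single_le_sum (fun _ _ => Nat.zero_le _) (Finsupp.mem_support_iff.2 hdi)
      exact h1.trans ((MvPolynomial.le_totalDegree hd).trans hdeg)
    refine Finset.mem_image.2 ⟨fun i => ⟨d i, Nat.lt_succ_of_le (hle i)⟩, Finset.mem_univ _, ?_⟩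
    ext i
    simp [D]
  · intro d _ hd
    simp only [G, MvPolynomial.notMem_support_iff.1 hd, zero_mul]
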